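/- arXiv:1907.06762 — 2 statements merged into one kernel-verified Lean document; each statement's English description precedes it below -/
import Mathlib

section
/- For an acute triangle in the Euclidean plane and every cyclic permutation (i,j,k) of (0,1,2), the quotient eᵢ/lᵢ of the distance from the circumcenter to the midpoint of the side opposite xᵢ by the length of that side equals the FEM coefficient dᵢ = lⱼ·lₖ·cos θᵢ/(4|t|); that is, eᵢ/lᵢ = lⱼ·lₖ·cos θᵢ/(4|t|). -/
open EuclideanGeometry Real MeasureTheory

open Set Pointwise

noncomputable def E0 : EuclideanSpace ℝ (Fin 2) := EuclideanSpace.single 0 1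
noncomputable def E1 : EuclideanSpace ℝ (Fin 2) := EuclideanSpace.single 1 1

lemma volS : volume {p : ℝ × ℝ | 0 ≤ p.1 ∧ 0 ≤ p.2 ∧ p.1 + p.2 ≤ 1} = ENNReal.ofReal (1/2) := by
  have MS : MeasurableSet {p : ℝ × ℝ | 0 ≤ p.1 ∧ 0 ≤ p.2 ∧ p.1 + p.2 ≤ 1} := by
    apply MeasurableSet.inter
    · exact measurableSet_le measurable_const measurable_fst
    apply MeasurableSet.inter
    · exact measurableSet_le measurable_const measurable_snd
    · exact measurableSet_le (measurable_fst.add measurable_snd) measurable_const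
  rw [Measure.volume_eq_prod, Measure.prod_apply MS]
  have hslice : ∀ x : ℝ, volume (Prod.mk x ⁻¹' {p : ℝ × ℝ | 0 ≤ p.1 ∧ 0 ≤ p.2 ∧ p.1 + p.2 ≤ 1})
      = (Icc (0:ℝ) 1).indicator (fun x => ENNReal.ofReal (1 - x)) x := by
    intro x
    by_cases hx0 : 0 ≤ x
    · have hset : Prod.mk x ⁻¹' {p : ℝ × ℝ | 0 ≤ p.1 ∧ 0 ≤ p.2 ∧ p.1 + p.2 ≤ 1} = Icc 0 (1 - x) := by
        ext y; simp only [mem_preimage, mem_setOf_eq, mem_Icc]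
        constructor
        · rintro ⟨_, h2, h3⟩; exact ⟨h2, by linarith⟩
        · rintro ⟨h2, h3⟩; exact ⟨hx0, h2, by linarith⟩
      rw [hset, Real.volume_Icc]
      by_cases hx1 : x ≤ 1
      · rw [indicator_of_mem (mem_Icc.mpr ⟨hx0, hx1⟩)]; norm_num
      · rw [indicator_of_notMem (by simp [mem_Icc, hx1])]
        rw [ENNReal.ofReal_eq_zero]; linarith
    · have hset : Prod.mk x ⁻¹' {p : ℝ × ℝ | 0 ≤ p.1 ∧ 0 ≤ p.2 ∧ p.1 + p.2 ≤ 1} = ∅ := by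
        ext y; simp only [mem_preimage, mem_setOf_eq, mem_empty_iff_false, iff_false]
        rintro ⟨h1, _⟩; exact hx0 h1
      rw [hset, measure_empty, indicator_of_notMem (by simp [mem_Icc]; intro h; linarith)]
  simp only [hslice]
  rw [lintegral_indicator measurableSet_Icc]
  have hint : IntegrableOn (fun x : ℝ => 1 - x) (Icc 0 1) := by
    apply Continuous.integrableOn_Icc; continuity
  rw [← ofReal_integral_eq_lintegral_ofReal hint
    ((ae_restrict_iff' measurableSet_Icc).mpr (ae_of_all _ (fun x hx => by
      simp only [Pi.zero_apply]; linarith [hx.2])))]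
  congr 1
  rw [MeasureTheory.integral_Icc_eq_integral_Ioc, ← intervalIntegral.integral_of_le zero_le_one]
  have : (∫ x in (0:ℝ)..1, (1 - x)) = 1/2 := by
    rw [intervalIntegral.integral_sub intervalIntegrable_const intervalIntegral.intervalIntegrable_id]
    simp
    norm_num
  rw [this]

lemma hullT : convexHull ℝ ({0, E0, E1} : Set (EuclideanSpace ℝ (Fin 2)))
    = {p : EuclideanSpace ℝ (Fin 2) | 0 ≤ p 0 ∧ 0 ≤ p 1 ∧ p 0 + p 1 ≤ 1} := by
  apply le_antisymm
  · apply convexHull_min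
    · intro p hp
      rcases hp with h | h | h <;> subst h <;>
        simp [E0, E1, EuclideanSpace.single_apply]
    · intro x hx y hy a b ha hb hab
      obtain ⟨hx0, hx1, hx2⟩ := hx
      obtain ⟨hy0, hy1, hy2⟩ := hy
      have e0 : (a • x + b • y) 0 = a * x 0 + b * y 0 := by
        simp [PiLp.add_apply, PiLp.smul_apply, smul_eq_mul]
      have e1 : (a • x + b • y) 1 = a * x 1 + b * y 1 := by
        simp [PiLp.add_apply, PiLp.smul_apply, smul_eq_mul]
      refine ⟨by rw [e0]; positivity, by rw [e1]; positivity, ?_⟩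
      rw [e0, e1]; nlinarith
  · intro p hp
    obtain ⟨h0, h1, h2⟩ := hp
    have := Finset.centerMass_mem_convexHull (Finset.univ : Finset (Fin 3))
      (w := ![1 - p 0 - p 1, p 0, p 1]) (z := ![0, E0, E1])
      (by intro i _; fin_cases i <;> simp <;> linarith)
      (by simp [Fin.sum_univ_three]; linarith)
      (s := {0, E0, E1}) (by intro i _; fin_cases i <;> simp)
    convert this using 1
    rw [Finset.centerMass, Fin.sum_univ_three, Fin.sum_univ_three]
    simp only [Matrix.cons_val_zero, Matrix.cons_val_one, Matrix.head_cons, Matrix.cons_val_two, Matrix.tail_cons]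
    have hsum : (1 - p 0 - p 1) + p 0 + p 1 = 1 := by ring
    rw [hsum]
    ext i
    fin_cases i <;>
      simp [E0, E1, EuclideanSpace.single_apply, PiLp.add_apply, PiLp.smul_apply, smul_eq_mul]

lemma volT : volume {p : EuclideanSpace ℝ (Fin 2) | 0 ≤ p 0 ∧ 0 ≤ p 1 ∧ p 0 + p 1 ≤ 1}
    = ENNReal.ofReal (1/2) := by
  have h1 := (EuclideanSpace.volume_preserving_symm_measurableEquiv_toLp (Fin 2)).measure_preimage_equiv
    {x : Fin 2 → ℝ | 0 ≤ x 0 ∧ 0 ≤ x 1 ∧ x 0 + x 1 ≤ 1}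
  have h2 := (volume_preserving_finTwoArrow ℝ).measure_preimage_equiv
    {p : ℝ × ℝ | 0 ≤ p.1 ∧ 0 ≤ p.2 ∧ p.1 + p.2 ≤ 1}
  have e1 : (MeasurableEquiv.toLp 2 (Fin 2 → ℝ)).symm ⁻¹' {x : Fin 2 → ℝ | 0 ≤ x 0 ∧ 0 ≤ x 1 ∧ x 0 + x 1 ≤ 1}
      = {p : EuclideanSpace ℝ (Fin 2) | 0 ≤ p 0 ∧ 0 ≤ p 1 ∧ p 0 + p 1 ≤ 1} := rfl
  have e2 : (MeasurableEquiv.finTwoArrow : (Fin 2 → ℝ) ≃ᵐ (ℝ × ℝ)) ⁻¹' {p : ℝ × ℝ | 0 ≤ p.1 ∧ 0 ≤ p.2 ∧ p.1 + p.2 ≤ 1}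
      = {x : Fin 2 → ℝ | 0 ≤ x 0 ∧ 0 ≤ x 1 ∧ x 0 + x 1 ≤ 1} := rfl
  rw [← e1, h1, ← e2, h2, volS]

noncomputable def lmap (u v : EuclideanSpace ℝ (Fin 2)) :
    EuclideanSpace ℝ (Fin 2) →ₗ[ℝ] EuclideanSpace ℝ (Fin 2) where
  toFun p := p 0 • u + p 1 • v
  map_add' x y := by
    simp only [PiLp.add_apply, add_smul]
    abel
  map_smul' c x := by
    simp only [PiLp.smul_apply, smul_eq_mul, RingHom.id_apply, smul_add, mul_smul]

lemma lmap_det (u v : EuclideanSpace ℝ (Fin 2)) :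
    LinearMap.det (lmap u v) = u 0 * v 1 - v 0 * u 1 := by
  have b := (EuclideanSpace.basisFun (Fin 2) ℝ).toBasis
  rw [← LinearMap.det_toMatrix (EuclideanSpace.basisFun (Fin 2) ℝ).toBasis (lmap u v)]
  rw [Matrix.det_fin_two]
  have h : ∀ i j : Fin 2, LinearMap.toMatrix (EuclideanSpace.basisFun (Fin 2) ℝ).toBasis
      (EuclideanSpace.basisFun (Fin 2) ℝ).toBasis (lmap u v) i j
      = (lmap u v) ((EuclideanSpace.basisFun (Fin 2) ℝ).toBasis j) i := by
    intro i j
    rw [LinearMap.toMatrix_apply]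
    simp [EuclideanSpace.basisFun_apply]
  rw [h, h, h, h]
  simp [lmap, EuclideanSpace.basisFun_apply, EuclideanSpace.single_apply, PiLp.add_apply,
    PiLp.smul_apply, smul_eq_mul]

lemma lmap_apply (u v p : EuclideanSpace ℝ (Fin 2)) : lmap u v p = p 0 • u + p 1 • v := rfl

lemma vol_triangle (y₀ y₁ y₂ : EuclideanSpace ℝ (Fin 2)) :
    volume (convexHull ℝ ({y₀, y₁, y₂} : Set (EuclideanSpace ℝ (Fin 2))))
      = ENNReal.ofReal (|(y₁ - y₀) 0 * (y₂ - y₀) 1 - (y₂ - y₀) 0 * (y₁ - y₀) 1| / 2) := by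
  set u := y₁ - y₀ with hu
  set v := y₂ - y₀ with hv
  set L := lmap u v with hL
  -- affine map F q = L q + y₀
  set F : EuclideanSpace ℝ (Fin 2) →ᵃ[ℝ] EuclideanSpace ℝ (Fin 2) :=
    AffineMap.mk' (fun q => L q + y₀) L 0 (by intro p; simp) with hF
  have himg : F '' ({0, E0, E1} : Set (EuclideanSpace ℝ (Fin 2))) = {y₀, y₁, y₂} := by
    have f0 : F 0 = y₀ := by
      show L 0 + y₀ = y₀
      rw [lmap_apply]
      simp
    have f1 : F E0 = y₁ := by
      show L E0 + y₀ = y₁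
      rw [lmap_apply]
      simp [E0, EuclideanSpace.single_apply, hu]
    have f2 : F E1 = y₂ := by
      show L E1 + y₀ = y₂
      rw [lmap_apply]
      simp [E1, EuclideanSpace.single_apply, hv]
    rw [Set.image_insert_eq, Set.image_insert_eq, Set.image_singleton, f0, f1, f2]
  rw [← himg, ← AffineMap.image_convexHull, hullT]
  have hcoe : (⇑F : EuclideanSpace ℝ (Fin 2) → EuclideanSpace ℝ (Fin 2))
      = (fun x => x + y₀) ∘ ⇑L := by
    ext q : 1
    show L q + y₀ = _
    rfl
  rw [hcoe, Set.image_comp]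
  have htrans : ∀ s : Set (EuclideanSpace ℝ (Fin 2)),
      volume ((fun x => x + y₀) '' s) = volume s := by
    intro s
    have himg2 : (fun x : EuclideanSpace ℝ (Fin 2) => x + y₀) '' s = y₀ +ᵥ s := by
      ext z
      simp only [Set.mem_image, Set.mem_vadd_set, vadd_eq_add]
      constructor
      · rintro ⟨w, hw, rfl⟩; exact ⟨w, hw, by abel⟩
      · rintro ⟨w, hw, rfl⟩; exact ⟨w, hw, by abel⟩
    rw [himg2, measure_vadd]
  rw [htrans, Measure.addHaar_image_linearMap, volT, lmap_det,
    ← ENNReal.ofReal_mul (abs_nonneg _)]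
  congr 1
  ring

lemma coord_dist (z w : EuclideanSpace ℝ (Fin 2)) :
    dist z w ^ 2 = (z 0 - w 0)^2 + (z 1 - w 1)^2 := by
  rw [EuclideanSpace.dist_eq, Real.sq_sqrt (by positivity)]
  simp [Fin.sum_univ_two, Real.dist_eq, sq_abs]

lemma main_one (y₀ y₁ y₂ C : EuclideanSpace ℝ (Fin 2))
    (hd : (y₁ - y₀) 0 * (y₂ - y₀) 1 - (y₂ - y₀) 0 * (y₁ - y₀) 1 ≠ 0)
    (h1 : dist C y₀ = dist C y₁) (h2 : dist C y₀ = dist C y₂)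
    (hθ : ∠ y₁ y₀ y₂ < π / 2) :
    dist C (midpoint ℝ y₁ y₂) / dist y₁ y₂ =
      dist y₀ y₂ * dist y₀ y₁ * Real.cos (∠ y₁ y₀ y₂) /
        (4 * (volume (convexHull ℝ ({y₀, y₁, y₂} : Set (EuclideanSpace ℝ (Fin 2))))).toReal) := by
  simp only [PiLp.sub_apply] at hd
  set d : ℝ := (y₁ 0 - y₀ 0) * (y₂ 1 - y₀ 1) - (y₂ 0 - y₀ 0) * (y₁ 1 - y₀ 1) with hd_def
  set ip : ℝ := (y₁ 0 - y₀ 0) * (y₂ 0 - y₀ 0) + (y₁ 1 - y₀ 1) * (y₂ 1 - y₀ 1) with hip_def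
  -- volume
  have hT : (volume (convexHull ℝ ({y₀, y₁, y₂} : Set (EuclideanSpace ℝ (Fin 2))))).toReal
      = |d| / 2 := by
    rw [vol_triangle]
    simp only [PiLp.sub_apply]
    rw [ENNReal.toReal_ofReal (by positivity)]
  -- inner product in coordinates
  have hinner : (inner ℝ (y₁ - y₀) (y₂ - y₀) : ℝ) = ip := by
    simp [PiLp.inner_apply, RCLike.inner_apply, conj_trivial, Fin.sum_univ_two, PiLp.sub_apply,
      hip_def]
    ring
  -- cosine
  have hcos : Real.cos (∠ y₁ y₀ y₂) = ip / (dist y₁ y₀ * dist y₂ y₀) := by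
    rw [EuclideanGeometry.angle, InnerProductGeometry.cos_angle]
    rw [show y₁ -ᵥ y₀ = y₁ - y₀ from rfl, show y₂ -ᵥ y₀ = y₂ - y₀ from rfl, hinner]
    rw [← dist_eq_norm, ← dist_eq_norm]
  -- nondegeneracy
  have hu : dist y₁ y₀ ≠ 0 := by
    intro h
    rw [dist_eq_zero] at h
    apply hd
    rw [hd_def, h]; ring
  have hv : dist y₂ y₀ ≠ 0 := by
    intro h
    rw [dist_eq_zero] at h
    apply hd
    rw [hd_def, h]; ring
  have ha : dist y₁ y₂ ≠ 0 := by
    intro h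
    rw [dist_eq_zero] at h
    apply hd
    rw [hd_def, h]; ring
  have hu' : 0 < dist y₁ y₀ := lt_of_le_of_ne dist_nonneg (Ne.symm hu)
  have hv' : 0 < dist y₂ y₀ := lt_of_le_of_ne dist_nonneg (Ne.symm hv)
  have ha' : 0 < dist y₁ y₂ := lt_of_le_of_ne dist_nonneg (Ne.symm ha)
  -- positivity of ip
  have hcospos : 0 < Real.cos (∠ y₁ y₀ y₂) := by
    apply Real.cos_pos_of_mem_Ioo
    constructor
    · have := EuclideanGeometry.angle_nonneg y₁ y₀ y₂
      have := Real.pi_pos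
      linarith
    · exact hθ
  have hip : 0 < ip := by
    rw [hcos] at hcospos
    by_contra h
    push_neg at h
    have : ip / (dist y₁ y₀ * dist y₂ y₀) ≤ 0 := div_nonpos_of_nonpos_of_nonneg h (by positivity)
    linarith
  -- circumcenter constraints
  have e1 : (C 0 - y₀ 0)^2 + (C 1 - y₀ 1)^2 = (C 0 - y₁ 0)^2 + (C 1 - y₁ 1)^2 := by
    have := congrArg (· ^ 2) h1
    simpa only [coord_dist] using this
  have e2 : (C 0 - y₀ 0)^2 + (C 1 - y₀ 1)^2 = (C 0 - y₂ 0)^2 + (C 1 - y₂ 1)^2 := by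
    have := congrArg (· ^ 2) h2
    simpa only [coord_dist] using this
  have hA : d * (2*(C 0 - y₀ 0)) =
      ((y₁ 0 - y₀ 0)^2 + (y₁ 1 - y₀ 1)^2) * (y₂ 1 - y₀ 1)
        - ((y₂ 0 - y₀ 0)^2 + (y₂ 1 - y₀ 1)^2) * (y₁ 1 - y₀ 1) := by
    linear_combination (y₂ 1 - y₀ 1) * e1 - (y₁ 1 - y₀ 1) * e2
  have hB : d * (2*(C 1 - y₀ 1)) =
      ((y₂ 0 - y₀ 0)^2 + (y₂ 1 - y₀ 1)^2) * (y₁ 0 - y₀ 0)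
        - ((y₁ 0 - y₀ 0)^2 + (y₁ 1 - y₀ 1)^2) * (y₂ 0 - y₀ 0) := by
    linear_combination (y₁ 0 - y₀ 0) * e2 - (y₂ 0 - y₀ 0) * e1
  -- midpoint coordinates
  have hm0 : (midpoint ℝ y₁ y₂) 0 = (y₁ 0 + y₂ 0)/2 := by
    simp [midpoint_eq_smul_add, PiLp.smul_apply, PiLp.add_apply, smul_eq_mul]
    ring
  have hm1 : (midpoint ℝ y₁ y₂) 1 = (y₁ 1 + y₂ 1)/2 := by
    simp [midpoint_eq_smul_add, PiLp.smul_apply, PiLp.add_apply, smul_eq_mul]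
    ring
  have keysq : (2 * |d| * dist C (midpoint ℝ y₁ y₂))^2 = (dist y₁ y₂ * ip)^2 := by
    rw [mul_pow, mul_pow, mul_pow, sq_abs, coord_dist C (midpoint ℝ y₁ y₂), hm0, hm1,
      coord_dist y₁ y₂]
    linear_combination (d * (2*(C 0 - y₀ 0)) + (((y₁ 0 - y₀ 0)^2 + (y₁ 1 - y₀ 1)^2) * (y₂ 1 - y₀ 1)
        - ((y₂ 0 - y₀ 0)^2 + (y₂ 1 - y₀ 1)^2) * (y₁ 1 - y₀ 1))
        - 2*d*((y₁ 0 - y₀ 0) + (y₂ 0 - y₀ 0))) * hA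
      + (d * (2*(C 1 - y₀ 1)) + (((y₂ 0 - y₀ 0)^2 + (y₂ 1 - y₀ 1)^2) * (y₁ 0 - y₀ 0)
        - ((y₁ 0 - y₀ 0)^2 + (y₁ 1 - y₀ 1)^2) * (y₂ 0 - y₀ 0))
        - 2*d*((y₁ 1 - y₀ 1) + (y₂ 1 - y₀ 1))) * hB
  have key : 2 * |d| * dist C (midpoint ℝ y₁ y₂) = dist y₁ y₂ * ip := by
    have hn1 : 0 ≤ 2 * |d| * dist C (midpoint ℝ y₁ y₂) := by positivity
    have hn2 : 0 ≤ dist y₁ y₂ * ip := by positivity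
    have := congrArg Real.sqrt keysq
    rwa [Real.sqrt_sq hn1, Real.sqrt_sq hn2] at this
  have hdne : |d| ≠ 0 := fun h => hd (abs_eq_zero.mp h)
  have hdpos : 0 < |d| := lt_of_le_of_ne (abs_nonneg d) (Ne.symm hdne)
  have hdm : dist C (midpoint ℝ y₁ y₂) = dist y₁ y₂ * ip / (2*|d|) := by
    rw [eq_div_iff (by positivity)]
    linear_combination key
  rw [hdm, hT, hcos, dist_comm y₀ y₂, dist_comm y₀ y₁]
  field_simp
  ring


lemma det_ne_of_not_collinear (y₀ y₁ y₂ : EuclideanSpace ℝ (Fin 2))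
    (h : ¬Collinear ℝ ({y₀, y₁, y₂} : Set (EuclideanSpace ℝ (Fin 2)))) :
    (y₁ - y₀) 0 * (y₂ - y₀) 1 - (y₂ - y₀) 0 * (y₁ - y₀) 1 ≠ 0 := by
  intro hd
  simp only [PiLp.sub_apply] at hd
  apply h
  rw [collinear_iff_of_mem (Set.mem_insert y₀ _)]
  by_cases hu : y₁ - y₀ = 0
  · refine ⟨y₂ - y₀, ?_⟩
    intro p hp
    rcases hp with rfl | rfl | hp2
    · exact ⟨0, by simp⟩
    · exact ⟨0, by simp [sub_eq_zero.mp hu]⟩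
    · subst hp2
      exact ⟨1, by simp⟩
  · have hcases : y₁ 0 - y₀ 0 ≠ 0 ∨ y₁ 1 - y₀ 1 ≠ 0 := by
      by_contra hc
      push_neg at hc
      apply hu
      ext i
      fin_cases i <;> simp [PiLp.sub_apply] <;> [linarith [hc.1]; linarith [hc.2]]
    refine ⟨y₁ - y₀, ?_⟩
    intro p hp
    rcases hp with rfl | rfl | hp2
    · exact ⟨0, by simp⟩
    · exact ⟨1, by simp⟩
    · rw [hp2]
      rcases hcases with h0 | h1
      · refine ⟨(y₂ 0 - y₀ 0) / (y₁ 0 - y₀ 0), ?_⟩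
        show y₂ = _ • (y₁ - y₀) + y₀
        ext i
        fin_cases i <;>
          simp only [PiLp.add_apply, PiLp.smul_apply, PiLp.sub_apply, smul_eq_mul, Fin.zero_eta, Fin.mk_one] <;>
          field_simp
        · ring
        · linear_combination hd
      · refine ⟨(y₂ 1 - y₀ 1) / (y₁ 1 - y₀ 1), ?_⟩
        show y₂ = _ • (y₁ - y₀) + y₀
        ext i
        fin_cases i <;>
          simp only [PiLp.add_apply, PiLp.smul_apply, PiLp.sub_apply, smul_eq_mul, Fin.zero_eta, Fin.mk_one] <;>
          field_simp
        · linear_combination -hd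
        · ring

/-- For an acute triangle in the Euclidean plane and every cyclic permutation `(i,j,k)`
of `(0,1,2)`, the quotient `eᵢ/lᵢ` (distance from the circumcenter to the midpoint of the
side opposite `xᵢ`, divided by the length of that side) equals the FEM coefficient
`dᵢ = lⱼ * lₖ * cos θᵢ / (4 * |t|)`, where `|t|` is the area of the triangle. -/
theorem dist_circumcenter_midpoint_div_side_eq_fem_coeff
    (x₀ x₁ x₂ C : EuclideanSpace ℝ (Fin 2))
    (hind : AffineIndependent ℝ ![x₀, x₁, x₂])
    (h01 : dist C x₀ = dist C x₁) (h02 : dist C x₀ = dist C x₂)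
    (hθ₀ : ∠ x₁ x₀ x₂ < π / 2) (hθ₁ : ∠ x₀ x₁ x₂ < π / 2)
    (hθ₂ : ∠ x₀ x₂ x₁ < π / 2) :
    dist C (midpoint ℝ x₁ x₂) / dist x₁ x₂ =
      dist x₀ x₂ * dist x₀ x₁ * Real.cos (∠ x₁ x₀ x₂) /
        (4 * (volume (convexHull ℝ {x₀, x₁, x₂})).toReal) ∧
    dist C (midpoint ℝ x₀ x₂) / dist x₀ x₂ =
      dist x₀ x₁ * dist x₁ x₂ * Real.cos (∠ x₀ x₁ x₂) /
        (4 * (volume (convexHull ℝ {x₀, x₁, x₂})).toReal) ∧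
    dist C (midpoint ℝ x₀ x₁) / dist x₀ x₁ =
      dist x₁ x₂ * dist x₀ x₂ * Real.cos (∠ x₀ x₂ x₁) /
        (4 * (volume (convexHull ℝ {x₀, x₁, x₂})).toReal) := by
  have hncol : ¬Collinear ℝ ({x₀, x₁, x₂} : Set (EuclideanSpace ℝ (Fin 2))) :=
    affineIndependent_iff_not_collinear_set.mp hind
  have hset1 : ({x₁, x₀, x₂} : Set (EuclideanSpace ℝ (Fin 2))) = {x₀, x₁, x₂} := by
    ext z; simp only [Set.mem_insert_iff, Set.mem_singleton_iff]; tauto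
  have hset2 : ({x₂, x₀, x₁} : Set (EuclideanSpace ℝ (Fin 2))) = {x₀, x₁, x₂} := by
    ext z; simp only [Set.mem_insert_iff, Set.mem_singleton_iff]; tauto
  have hd0 := det_ne_of_not_collinear x₀ x₁ x₂ hncol
  have hd1 := det_ne_of_not_collinear x₁ x₀ x₂ (by rw [hset1]; exact hncol)
  have hd2 := det_ne_of_not_collinear x₂ x₀ x₁ (by rw [hset2]; exact hncol)
  refine ⟨main_one x₀ x₁ x₂ C hd0 h01 h02 hθ₀, ?_, ?_⟩
  · rw [dist_comm x₀ x₁, mul_comm (dist x₁ x₀) (dist x₁ x₂), ← hset1]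
    exact main_one x₁ x₀ x₂ C hd1 h01.symm (h01.symm.trans h02) hθ₁
  · rw [dist_comm x₁ x₂, dist_comm x₀ x₂, ← hset2]
    exact main_one x₂ x₀ x₁ C hd2 h02.symm (h02.symm.trans h01) hθ₂
end

section
/- Let t = x₀x₁x₂ be a triangle in the Euclidean plane, let u : ℝ² → ℝ be an affine function with values uᵢ = u(xᵢ), and let φ₀ be the barycentric coordinate function of x₀. Then the local FEM stiffness identity holds: ∫_t ⟪∇u, ∇φ₀⟫ dx = −d₂·u₁ + (d₁ + d₂)·u₀ − d₁·u₂, where dᵢ = lⱼ·lₖ·cos θᵢ/(4|t|) for (i,j,k) a cyclic permutation of (0,1,2). -/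
open EuclideanGeometry Real MeasureTheory
open scoped RealInnerProductSpace

section helpers
open MeasureTheory

lemma fem_slice_vol : ∀ x : ℝ, volume {y : ℝ | 0 ≤ x ∧ 0 ≤ y ∧ x + y ≤ 1}
    = Set.indicator (Set.Icc (0:ℝ) 1) (fun x => ENNReal.ofReal (1 - x)) x := by
  intro x
  by_cases hx : x ∈ Set.Icc (0:ℝ) 1
  · rw [Set.indicator_of_mem hx]
    have : {y : ℝ | 0 ≤ x ∧ 0 ≤ y ∧ x + y ≤ 1} = Set.Icc 0 (1 - x) := by
      ext y; simp [hx.1]; intro _; constructor <;> intro h <;> linarith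
    rw [this, Real.volume_Icc]; ring_nf
  · rw [Set.indicator_of_notMem hx]
    have : {y : ℝ | 0 ≤ x ∧ 0 ≤ y ∧ x + y ≤ 1} = ∅ := by
      ext y; simp only [Set.mem_setOf_eq, Set.mem_empty_iff_false, iff_false]
      rintro ⟨h1, h2, h3⟩
      simp only [Set.mem_Icc, not_and_or, not_le] at hx
      rcases hx with h | h; · linarith
      · linarith
    simp [this]

lemma fem_vol_S' : volume {q : ℝ × ℝ | 0 ≤ q.1 ∧ 0 ≤ q.2 ∧ q.1 + q.2 ≤ 1} = ENNReal.ofReal (1/2) := by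
  have hmeas : MeasurableSet {q : ℝ × ℝ | 0 ≤ q.1 ∧ 0 ≤ q.2 ∧ q.1 + q.2 ≤ 1} := by
    apply MeasurableSet.inter
    · exact measurableSet_le measurable_const measurable_fst
    apply MeasurableSet.inter
    · exact measurableSet_le measurable_const measurable_snd
    · exact measurableSet_le (measurable_fst.add measurable_snd) measurable_const
  rw [Measure.volume_eq_prod, Measure.prod_apply hmeas]
  have : ∀ x : ℝ, volume (Prod.mk x ⁻¹' {q : ℝ × ℝ | 0 ≤ q.1 ∧ 0 ≤ q.2 ∧ q.1 + q.2 ≤ 1})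
      = Set.indicator (Set.Icc (0:ℝ) 1) (fun x => ENNReal.ofReal (1 - x)) x := by
    intro x; exact fem_slice_vol x
  simp_rw [this]
  rw [lintegral_indicator measurableSet_Icc]
  rw [← ofReal_integral_eq_lintegral_ofReal]
  · rw [MeasureTheory.integral_Icc_eq_integral_Ioc, ← intervalIntegral.integral_of_le (by norm_num : (0:ℝ) ≤ 1)]
    have : (∫ (x : ℝ) in (0:ℝ)..1, (1 - x)) = 1/2 := by
      have h1 : (∫ x in (0:ℝ)..1, (1 - x)) = (∫ _x in (0:ℝ)..1, (1:ℝ)) - ∫ x in (0:ℝ)..1, x :=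
        intervalIntegral.integral_sub (continuous_const.intervalIntegrable _ _)
          (continuous_id.intervalIntegrable _ _)
      rw [h1, integral_id, intervalIntegral.integral_const]
      norm_num
    rw [this]
  · exact (continuous_const.sub continuous_id).integrableOn_Icc.mono_set le_rfl |>.mono_set le_rfl
  · filter_upwards [ae_restrict_mem measurableSet_Icc] with x hx
    simp only [Pi.zero_apply]; linarith [hx.2]

noncomputable abbrev E2 := EuclideanSpace ℝ (Fin 2)

lemma fem_vol_SE (h : volume {q : ℝ × ℝ | 0 ≤ q.1 ∧ 0 ≤ q.2 ∧ q.1 + q.2 ≤ 1} = ENNReal.ofReal (1/2)) :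
    volume {p : E2 | 0 ≤ p 0 ∧ 0 ≤ p 1 ∧ p 0 + p 1 ≤ 1} = ENNReal.ofReal (1/2) := by
  have hmeas : MeasurableSet {q : ℝ × ℝ | 0 ≤ q.1 ∧ 0 ≤ q.2 ∧ q.1 + q.2 ≤ 1} := by
    refine MeasurableSet.inter (measurableSet_le measurable_const measurable_fst) ?_
    exact MeasurableSet.inter (measurableSet_le measurable_const measurable_snd)
      (measurableSet_le (measurable_fst.add measurable_snd) measurable_const)
  have e1 := EuclideanSpace.volume_preserving_symm_measurableEquiv_toLp (Fin 2)
  have e2 := volume_preserving_piFinTwo (fun _ : Fin 2 => ℝ)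
  have key := (e2.comp e1).measure_preimage
    (s := {q : ℝ × ℝ | 0 ≤ q.1 ∧ 0 ≤ q.2 ∧ q.1 + q.2 ≤ 1}) hmeas.nullMeasurableSet
  have hpre : ((MeasurableEquiv.piFinTwo fun _ : Fin 2 => ℝ) ∘ (MeasurableEquiv.toLp 2 (Fin 2 → ℝ)).symm) ⁻¹'
      {q : ℝ × ℝ | 0 ≤ q.1 ∧ 0 ≤ q.2 ∧ q.1 + q.2 ≤ 1} = {p : E2 | 0 ≤ p 0 ∧ 0 ≤ p 1 ∧ p 0 + p 1 ≤ 1} := by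
    ext p
    simp [MeasurableEquiv.piFinTwo]
  rw [hpre] at key
  rw [key, h]


lemma fem_coord_linear (i : Fin 2) : IsLinearMap ℝ (fun p : E2 => p i) := by
  constructor <;> intros <;> rfl

lemma fem_sum_linear : IsLinearMap ℝ (fun p : E2 => p 0 + p 1) := by
  constructor <;> intros <;> (show _ = _; simp [PiLp.add_apply, PiLp.smul_apply, smul_eq_mul]; ring)

lemma fem_hull_eq : convexHull ℝ {(0:E2), (EuclideanSpace.single (0 : Fin 2) (1:ℝ)), (EuclideanSpace.single (1 : Fin 2) (1:ℝ))} = {p : E2 | 0 ≤ p 0 ∧ 0 ≤ p 1 ∧ p 0 + p 1 ≤ 1} := by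
  apply Set.Subset.antisymm
  · apply convexHull_min
    · rintro p (rfl | rfl | rfl) <;>
        simp [EuclideanSpace.single_apply, Set.mem_setOf_eq] <;> norm_num
    · refine Convex.inter (convex_halfSpace_ge (fem_coord_linear 0) 0) ?_
      exact Convex.inter (convex_halfSpace_ge (fem_coord_linear 1) 0) (convex_halfSpace_le fem_sum_linear 1)
  · rintro p ⟨h0, h1, hs⟩
    have hmem := Finset.centerMass_mem_convexHull (Finset.univ : Finset (Fin 3))
      (w := ![1 - p 0 - p 1, p 0, p 1]) (z := ![(0:E2), (EuclideanSpace.single (0 : Fin 2) (1:ℝ)), (EuclideanSpace.single (1 : Fin 2) (1:ℝ))]) (s := {(0:E2), (EuclideanSpace.single (0 : Fin 2) (1:ℝ)), (EuclideanSpace.single (1 : Fin 2) (1:ℝ))})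
      (by intro i _; fin_cases i <;> simp <;> linarith)
      (by simp [Fin.sum_univ_three]; linarith)
      (by intro i _; fin_cases i <;> simp)
    have hp : Finset.centerMass Finset.univ ![1 - p 0 - p 1, p 0, p 1] ![(0:E2), (EuclideanSpace.single (0 : Fin 2) (1:ℝ)), (EuclideanSpace.single (1 : Fin 2) (1:ℝ))] = p := by
      rw [Finset.centerMass]
      have hsum : (∑ i, ![1 - p 0 - p 1, p 0, p 1] i) = 1 := by
        simp [Fin.sum_univ_three]; ring
      rw [hsum, inv_one, one_smul]
      ext j
      fin_cases j <;>
        simp [Fin.sum_univ_three, EuclideanSpace.single_apply, PiLp.add_apply,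
          PiLp.smul_apply, smul_eq_mul]
    rwa [hp] at hmem

lemma fem_key_algebra (p00 p01 p10 p11 p20 p21 g0 g1 f0 f1 c A : ℝ)
    (hA2 : 4*A^2 = ((p10-p00)*(p21-p01) - (p11-p01)*(p20-p00))^2)
    (hA : A ≠ 0)
    (h1 : (f0*p10 + f1*p11) - (f0*p00 + f1*p01) = -1)
    (h2 : (f0*p20 + f1*p21) - (f0*p00 + f1*p01) = -1) :
    A * (g0*f0 + g1*f1) =
      -(((p00-p20)*(p10-p20) + (p01-p21)*(p11-p21))/(4*A)) * ((g0*p10+g1*p11) + c)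
      + ( ((p00-p10)*(p20-p10) + (p01-p11)*(p21-p11))/(4*A)
        + ((p00-p20)*(p10-p20) + (p01-p21)*(p11-p21))/(4*A) ) * ((g0*p00+g1*p01) + c)
      - ((p00-p10)*(p20-p10) + (p01-p11)*(p21-p11))/(4*A) * ((g0*p20+g1*p21) + c) := by
  have key : ((p10-p00)*(p21-p01) - (p11-p01)*(p20-p00))^2 * (g0*f0 + g1*f1)
      = -((p00-p20)*(p10-p20) + (p01-p21)*(p11-p21)) * (g0*(p10-p00) + g1*(p11-p01))
        - ((p00-p10)*(p20-p10) + (p01-p11)*(p21-p11)) * (g0*(p20-p00) + g1*(p21-p01)) := by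
    linear_combination
      (((p10-p00)*(p21-p01) - (p11-p01)*(p20-p00)) * (g0*(p21-p01) - g1*(p20-p00))) * h1 +
      (((p10-p00)*(p21-p01) - (p11-p01)*(p20-p00)) * (g1*(p10-p00) - g0*(p11-p01))) * h2
  have h4A : (4:ℝ)*A ≠ 0 := by
    intro h; exact hA (by linarith [h] )
  have expand :
      -(((p00-p20)*(p10-p20) + (p01-p21)*(p11-p21))/(4*A)) * ((g0*p10+g1*p11) + c)
      + ( ((p00-p10)*(p20-p10) + (p01-p11)*(p21-p11))/(4*A)
        + ((p00-p20)*(p10-p20) + (p01-p21)*(p11-p21))/(4*A) ) * ((g0*p00+g1*p01) + c)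
      - ((p00-p10)*(p20-p10) + (p01-p11)*(p21-p11))/(4*A) * ((g0*p20+g1*p21) + c)
      = (-((p00-p20)*(p10-p20) + (p01-p21)*(p11-p21)) * (g0*(p10-p00) + g1*(p11-p01))
        - ((p00-p10)*(p20-p10) + (p01-p11)*(p21-p11)) * (g0*(p20-p00) + g1*(p21-p01))) / (4*A) := by
    ring
  rw [expand, eq_div_iff h4A]
  linear_combination key + (g0*f0 + g1*f1) * hA2

end helpers

/-- Local FEM stiffness identity: for a triangle `t = x₀x₁x₂` in the Euclidean plane,
an affine function `u x = ⟪g, x⟫ + c` with values `uᵢ = u xᵢ`, and the barycentric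
coordinate function `φ₀` of `x₀` (affine with gradient `gφ`, `φ₀ x₀ = 1`,
`φ₀ x₁ = φ₀ x₂ = 0`), we have
`∫_t ⟪∇u, ∇φ₀⟫ dx = -d₂ * u₁ + (d₁ + d₂) * u₀ - d₁ * u₂`,
where `dᵢ = lⱼ * lₖ * cos θᵢ / (4 * |t|)` for `(i,j,k)` a cyclic permutation of
`(0,1,2)`. -/
theorem local_fem_stiffness_identity
    (x₀ x₁ x₂ : EuclideanSpace ℝ (Fin 2))
    (hind : AffineIndependent ℝ ![x₀, x₁, x₂])
    (g gφ : EuclideanSpace ℝ (Fin 2)) (c cφ : ℝ)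
    (u φ₀ : EuclideanSpace ℝ (Fin 2) → ℝ)
    (hu : ∀ x, u x = ⟪g, x⟫ + c)
    (hφ : ∀ x, φ₀ x = ⟪gφ, x⟫ + cφ)
    (hφ₀ : φ₀ x₀ = 1) (hφ₁ : φ₀ x₁ = 0) (hφ₂ : φ₀ x₂ = 0) :
    ∫ _x in convexHull ℝ {x₀, x₁, x₂}, ⟪g, gφ⟫ ∂volume =
      -(dist x₁ x₂ * dist x₀ x₂ * Real.cos (∠ x₀ x₂ x₁) /
          (4 * (volume (convexHull ℝ {x₀, x₁, x₂})).toReal)) * u x₁ +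
      (dist x₀ x₁ * dist x₁ x₂ * Real.cos (∠ x₀ x₁ x₂) /
          (4 * (volume (convexHull ℝ {x₀, x₁, x₂})).toReal) +
        dist x₁ x₂ * dist x₀ x₂ * Real.cos (∠ x₀ x₂ x₁) /
          (4 * (volume (convexHull ℝ {x₀, x₁, x₂})).toReal)) * u x₀ -
      dist x₀ x₁ * dist x₁ x₂ * Real.cos (∠ x₀ x₁ x₂) /
          (4 * (volume (convexHull ℝ {x₀, x₁, x₂})).toReal) * u x₂ := by
  -- vectors
  set a : EuclideanSpace ℝ (Fin 2) := x₁ - x₀ with ha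
  set b : EuclideanSpace ℝ (Fin 2) := x₂ - x₀ with hb
  -- linear independence of a, b
  have hli : LinearIndependent ℝ ![a, b] := by
    rw [LinearIndependent.pair_iff]
    intro s t hst
    have h := affineIndependent_iff.mp hind Finset.univ ![-s - t, s, t]
      (by simp [Fin.sum_univ_three]; ring)
      (by
        rw [Fin.sum_univ_three]
        simp only [Matrix.cons_val_zero, Matrix.cons_val_one, Matrix.head_cons,
          Matrix.cons_val_two, Matrix.tail_cons]
        have h' : s • a + t • b = 0 := hst
        rw [ha, hb] at h'
        linear_combination (norm := module) h')
    exact ⟨h 1 (Finset.mem_univ _), h 2 (Finset.mem_univ _)⟩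
  -- basis and linear map
  set bb : Module.Basis (Fin 2) ℝ (EuclideanSpace ℝ (Fin 2)) :=
    (EuclideanSpace.basisFun (Fin 2) ℝ).toBasis with hbb
  set L := bb.constr ℝ ![a, b] with hL
  have hLa : L (bb 0) = a := bb.constr_basis ℝ ![a, b] 0
  have hLb : L (bb 1) = b := bb.constr_basis ℝ ![a, b] 1
  -- determinant
  set D : ℝ := a 0 * b 1 - a 1 * b 0 with hD
  have hdet : LinearMap.det L = D := by
    rw [← LinearMap.det_toMatrix bb, Matrix.det_fin_two]
    have e00 : LinearMap.toMatrix bb bb L 0 0 = a 0 := by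
      rw [LinearMap.toMatrix_apply, hLa]; simp [hbb]
    have e10 : LinearMap.toMatrix bb bb L 1 0 = a 1 := by
      rw [LinearMap.toMatrix_apply, hLa]; simp [hbb]
    have e01 : LinearMap.toMatrix bb bb L 0 1 = b 0 := by
      rw [LinearMap.toMatrix_apply, hLb]; simp [hbb]
    have e11 : LinearMap.toMatrix bb bb L 1 1 = b 1 := by
      rw [LinearMap.toMatrix_apply, hLb]; simp [hbb]
    rw [e00, e10, e01, e11]; ring
  have hDne : D ≠ 0 := by
    set b' : Module.Basis (Fin 2) ℝ (EuclideanSpace ℝ (Fin 2)) :=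
      basisOfLinearIndependentOfCardEqFinrank hli (by simp) with hb'
    have hLe : L = (bb.equiv b' (Equiv.refl _)).toLinearMap := by
      apply bb.ext
      intro i
      rw [show ((bb.equiv b' (Equiv.refl (Fin 2))) : _ →ₗ[ℝ] _) (bb i) = b' i from
        Module.Basis.equiv_apply bb i b' (Equiv.refl _)]
      fin_cases i
      · simpa [hb'] using hLa
      · simpa [hb'] using hLb
    rw [← hdet, hLe]
    exact (LinearEquiv.isUnit_det' _).ne_zero
  -- affine map
  set f : EuclideanSpace ℝ (Fin 2) →ᵃ[ℝ] EuclideanSpace ℝ (Fin 2) :=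
    AffineMap.mk' (fun p => x₀ + L p) L 0 (by intro p'; simp; abel) with hf
  have hf0 : f 0 = x₀ := by simp [hf]
  have hbb0 : bb 0 = EuclideanSpace.single 0 1 := by simp [hbb]
  have hbb1 : bb 1 = EuclideanSpace.single 1 1 := by simp [hbb]
  have hfE0 : f (EuclideanSpace.single 0 1) = x₁ := by
    show x₀ + L (EuclideanSpace.single 0 1) = x₁
    rw [← hbb0, hLa, ha]; abel
  have hfE1 : f (EuclideanSpace.single 1 1) = x₂ := by
    show x₀ + L (EuclideanSpace.single 1 1) = x₂
    rw [← hbb1, hLb, hb]; abel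
  have himg : ⇑f '' {0, EuclideanSpace.single 0 1, EuclideanSpace.single 1 1} = {x₀, x₁, x₂} := by
    rw [Set.image_insert_eq, Set.image_insert_eq, Set.image_singleton, hf0, hfE0, hfE1]
  have hT : convexHull ℝ {x₀, x₁, x₂}
      = ⇑f '' convexHull ℝ {0, EuclideanSpace.single 0 1, EuclideanSpace.single 1 1} := by
    rw [AffineMap.image_convexHull, himg]
  -- volume
  have hvol : volume (convexHull ℝ {x₀, x₁, x₂}) = ENNReal.ofReal (|D| / 2) := by
    rw [hT, fem_hull_eq]
    have hcomp : ⇑f '' {p : EuclideanSpace ℝ (Fin 2) | 0 ≤ p 0 ∧ 0 ≤ p 1 ∧ p 0 + p 1 ≤ 1}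
        = (x₀ + ·) '' (⇑L '' {p : EuclideanSpace ℝ (Fin 2) | 0 ≤ p 0 ∧ 0 ≤ p 1 ∧ p 0 + p 1 ≤ 1}) := by
      rw [← Set.image_comp]; rfl
    rw [hcomp, Set.image_add_left, measure_preimage_add,
      Measure.addHaar_image_linearMap, hdet, fem_vol_SE fem_vol_S',
      ← ENNReal.ofReal_mul (abs_nonneg D)]
    rw [mul_one_div]
  have htoReal : (volume (convexHull ℝ {x₀, x₁, x₂})).toReal = |D| / 2 := by
    rw [hvol, ENNReal.toReal_ofReal (by positivity)]
  -- distinct points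
  have hinj := hind.injective
  have hne01 : x₀ ≠ x₁ := fun h => by
    have : (0 : Fin 3) = 1 := hinj (by simpa using h)
    exact absurd this (by decide)
  have hne02 : x₀ ≠ x₂ := fun h => by
    have : (0 : Fin 3) = 2 := hinj (by simpa using h)
    exact absurd this (by decide)
  have hne12 : x₁ ≠ x₂ := fun h => by
    have : (1 : Fin 3) = 2 := hinj (by simpa using h)
    exact absurd this (by decide)
  -- cosine formulas
  have hcos1 : dist x₀ x₁ * dist x₁ x₂ * Real.cos (∠ x₀ x₁ x₂) = ⟪x₀ - x₁, x₂ - x₁⟫ := by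
    rw [show (∠ x₀ x₁ x₂) = InnerProductGeometry.angle (x₀ -ᵥ x₁) (x₂ -ᵥ x₁) from rfl,
      InnerProductGeometry.cos_angle, vsub_eq_sub, vsub_eq_sub, dist_eq_norm, dist_eq_norm]
    have n1 : ‖x₀ - x₁‖ ≠ 0 := norm_ne_zero_iff.mpr (sub_ne_zero_of_ne hne01)
    have n2 : ‖x₂ - x₁‖ ≠ 0 := norm_ne_zero_iff.mpr (sub_ne_zero_of_ne hne12.symm)
    rw [show ‖x₁ - x₂‖ = ‖x₂ - x₁‖ from norm_sub_rev _ _]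
    field_simp
  have hcos2 : dist x₁ x₂ * dist x₀ x₂ * Real.cos (∠ x₀ x₂ x₁) = ⟪x₀ - x₂, x₁ - x₂⟫ := by
    rw [show (∠ x₀ x₂ x₁) = InnerProductGeometry.angle (x₀ -ᵥ x₂) (x₁ -ᵥ x₂) from rfl,
      InnerProductGeometry.cos_angle, vsub_eq_sub, vsub_eq_sub, dist_eq_norm, dist_eq_norm]
    have n1 : ‖x₀ - x₂‖ ≠ 0 := norm_ne_zero_iff.mpr (sub_ne_zero_of_ne hne02)
    have n2 : ‖x₁ - x₂‖ ≠ 0 := norm_ne_zero_iff.mpr (sub_ne_zero_of_ne hne12)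
    field_simp
  -- gφ equations
  have hg1 : ⟪gφ, x₁⟫ - ⟪gφ, x₀⟫ = -1 := by
    have e0 := hφ x₀; have e1 := hφ x₁
    rw [hφ₀] at e0; rw [hφ₁] at e1; linarith
  have hg2 : ⟪gφ, x₂⟫ - ⟪gφ, x₀⟫ = -1 := by
    have e0 := hφ x₀; have e2 := hφ x₂
    rw [hφ₀] at e0; rw [hφ₂] at e2; linarith
  -- final computation
  rw [MeasureTheory.setIntegral_const, measureReal_def, htoReal, hcos1, hcos2, hu x₀, hu x₁, hu x₂]
  have hA2 : 4 * (|D| / 2) ^ 2 = ((x₁ 0 - x₀ 0) * (x₂ 1 - x₀ 1) - (x₁ 1 - x₀ 1) * (x₂ 0 - x₀ 0)) ^ 2 := by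
    have : |D| ^ 2 = D ^ 2 := sq_abs D
    have hDco : D = (x₁ 0 - x₀ 0) * (x₂ 1 - x₀ 1) - (x₁ 1 - x₀ 1) * (x₂ 0 - x₀ 0) := by
      rw [hD, ha, hb]; simp [PiLp.sub_apply]
    rw [← hDco, div_pow, sq_abs]; ring
  have hAne : |D| / 2 ≠ 0 := by
    have : 0 < |D| := abs_pos.mpr hDne
    positivity
  have KA := fem_key_algebra (x₀ 0) (x₀ 1) (x₁ 0) (x₁ 1) (x₂ 0) (x₂ 1) (g 0) (g 1)
    (gφ 0) (gφ 1) c (|D| / 2) hA2 hAne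
    (by
      have := hg1
      simp only [PiLp.inner_apply, RCLike.inner_apply, conj_trivial, Fin.sum_univ_two] at this
      linarith)
    (by
      have := hg2
      simp only [PiLp.inner_apply, RCLike.inner_apply, conj_trivial, Fin.sum_univ_two] at this
      linarith)
  simp only [PiLp.inner_apply, RCLike.inner_apply, conj_trivial, Fin.sum_univ_two,
    PiLp.sub_apply, smul_eq_mul]
  linear_combination KA
end
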